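/- arXiv:1206.1906 — 2 statements merged into one kernel-verified Lean document; each statement's English description precedes it below -/
import Mathlib

section
/- Let H be a vertex-transitive graph. Then l_f(H) = |V(H)| / (2k(H) − max{2λ(H), 2μ(H) − 2}). -/
open Finset

variable {α β V : Type*}

/-- The corona product `G ⊙ H`. -/
def SimpleGraph.corona (G : SimpleGraph α) (H : SimpleGraph β) :
    SimpleGraph (α ⊕ α × β) where
  Adj x y :=
    match x, y with
    | Sum.inl u1, Sum.inl u2 => G.Adj u1 u2
    | Sum.inl u1, Sum.inr p => u1 = p.1
    | Sum.inr p, Sum.inl u2 => p.1 = u2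
    | Sum.inr p, Sum.inr q => p.1 = q.1 ∧ H.Adj p.2 q.2
  symm := ⟨by
    rintro (u1 | p) (u2 | q) h
    · exact h.symm
    · exact h.symm
    · exact h.symm
    · exact ⟨h.1.symm, h.2.symm⟩⟩
  loopless := ⟨by
    rintro (u | p) h
    · exact G.irrefl h
    · exact H.irrefl h.2⟩

/-- The lexicographic product `G[H]`. -/
def SimpleGraph.lexProd (G : SimpleGraph α) (H : SimpleGraph β) :
    SimpleGraph (α × β) where
  Adj x y := G.Adj x.1 y.1 ∨ (x.1 = y.1 ∧ H.Adj x.2 y.2)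
  symm := ⟨by
    rintro x y (h | ⟨h1, h2⟩)
    · exact Or.inl h.symm
    · exact Or.inr ⟨h1.symm, h2.symm⟩⟩
  loopless := ⟨by
    rintro x (h | ⟨h1, h2⟩)
    · exact G.irrefl h
    · exact H.irrefl h2⟩

open scoped Classical in
/-- `R_F{x,y}`: the set of vertices resolving `x` and `y` (distance measured by `edist`,
which is `∞` between vertices in different components). -/
noncomputable def resolvingFinset (F : SimpleGraph V) [Fintype V] (x y : V) : Finset V :=
  univ.filter fun z => F.edist x z ≠ F.edist y z

/-- `S_H{v₁,v₂} = {v₁,v₂} ∪ (N_H(v₁) Δ N_H(v₂))`. -/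
def locatingFinset (H : SimpleGraph V) [Fintype V] [DecidableEq V]
    [DecidableRel H.Adj] (v1 v2 : V) : Finset V :=
  {v1, v2} ∪ symmDiff (H.neighborFinset v1) (H.neighborFinset v2)

/-- A resolving function of `F`. -/
def IsResolvingFn (F : SimpleGraph V) [Fintype V] (g : V → ℝ) : Prop :=
  (∀ v, g v ∈ Set.Icc (0 : ℝ) 1) ∧
    ∀ x y : V, x ≠ y → 1 ≤ ∑ z ∈ resolvingFinset F x y, g z

/-- The fractional metric dimension `dim_f(F)`. -/
noncomputable def fracMetricDim (F : SimpleGraph V) [Fintype V] : ℝ :=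
  sInf {w | ∃ g, IsResolvingFn F g ∧ w = ∑ v, g v}

/-- A locating function of `H`. -/
def IsLocatingFn (H : SimpleGraph V) [Fintype V] [DecidableEq V]
    [DecidableRel H.Adj] (g : V → ℝ) : Prop :=
  (∀ v, g v ∈ Set.Icc (0 : ℝ) 1) ∧
    ∀ v1 v2 : V, v1 ≠ v2 → 1 ≤ ∑ v ∈ locatingFinset H v1 v2, g v

/-- `l_f(H)`: the minimum weight of a locating function. -/
noncomputable def fracLoc (H : SimpleGraph V) [Fintype V] [DecidableEq V]
    [DecidableRel H.Adj] : ℝ :=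
  sInf {w | ∃ g, IsLocatingFn H g ∧ w = ∑ v, g v}

open scoped Classical in
/-- `λ(H)`: maximum number of common neighbours of two adjacent vertices, `-1` if no edges. -/
noncomputable def lambdaMax (H : SimpleGraph V) [Fintype V] : ℤ :=
  if hne : (univ.filter fun p : V × V => H.Adj p.1 p.2).Nonempty then
    (univ.filter fun p : V × V => H.Adj p.1 p.2).sup' hne fun p =>
      ((univ.filter fun w => H.Adj p.1 w ∧ H.Adj p.2 w).card : ℤ)
  else -1

open scoped Classical in
/-- `μ(H)`: maximum number of common neighbours of two distinct nonadjacent vertices,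
`0` for complete graphs. -/
noncomputable def muMax (H : SimpleGraph V) [Fintype V] : ℤ :=
  if hne : (univ.filter fun p : V × V => p.1 ≠ p.2 ∧ ¬H.Adj p.1 p.2).Nonempty then
    (univ.filter fun p : V × V => p.1 ≠ p.2 ∧ ¬H.Adj p.1 p.2).sup' hne fun p =>
      ((univ.filter fun w => H.Adj p.1 w ∧ H.Adj p.2 w).card : ℤ)
  else 0

/-- A graph is vertex-transitive if its automorphism group is transitive on vertices. -/
def IsVertexTransitive (H : SimpleGraph V) : Prop :=
  ∀ u v : V, ∃ φ : H ≃g H, φ u = v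

/-- Two distinct vertices are twins if they have the same closed or the same open
neighbourhood. -/
def SimpleGraph.Twins (G : SimpleGraph V) (u1 u2 : V) : Prop :=
  u1 ≠ u2 ∧ (insert u1 (G.neighborSet u1) = insert u2 (G.neighborSet u2) ∨
    G.neighborSet u1 = G.neighborSet u2)

open scoped Classical in
/-- `m₁(G)`: number of vertices in twin-equivalence classes of type 1 (singletons). -/
noncomputable def m1 (G : SimpleGraph V) [Fintype V] : ℕ :=
  (univ.filter fun u => ∀ w, ¬G.Twins u w).card

open scoped Classical in
/-- `m₂(G)`: number of vertices in twin-equivalence classes of type 2 (cliques). -/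
noncomputable def m2 (G : SimpleGraph V) [Fintype V] : ℕ :=
  (univ.filter fun u => ∃ w, G.Twins u w ∧ G.Adj u w).card

open scoped Classical in
/-- `m₃(G)`: number of vertices in twin-equivalence classes of type 3 (independent sets). -/
noncomputable def m3 (G : SimpleGraph V) [Fintype V] : ℕ :=
  (univ.filter fun u => ∃ w, G.Twins u w ∧ ¬G.Adj u w).card


section AuxLemmas

set_option linter.unusedSectionVars false

variable {V : Type*} [Fintype V] [DecidableEq V] (H : SimpleGraph V) [DecidableRel H.Adj]

lemma aux_symmDiff_card (s t : Finset V) :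
    (symmDiff s t).card + ((s ∩ t).card + (s ∩ t).card) = s.card + t.card := by
  rw [symmDiff_def]
  have hdis : Disjoint (s \ t) (t \ s) := disjoint_sdiff_sdiff
  have h1 := Finset.card_sdiff_add_card_inter s t
  have h2 := Finset.card_sdiff_add_card_inter t s
  rw [Finset.inter_comm t s] at h2
  have := Finset.card_union_of_disjoint hdis
  simp only [Finset.sup_eq_union] at *
  omega

lemma aux_cc (u v : V) {inst : DecidablePred fun w => H.Adj u w ∧ H.Adj v w} :
    (@Finset.filter V (fun w => H.Adj u w ∧ H.Adj v w) inst Finset.univ) =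
      H.neighborFinset u ∩ H.neighborFinset v := by
  ext w
  simp [SimpleGraph.mem_neighborFinset]

lemma aux_nf_image (φ : H ≃g H) (u : V) :
    H.neighborFinset (φ u) = (H.neighborFinset u).image φ := by
  ext w
  simp only [SimpleGraph.mem_neighborFinset, Finset.mem_image]
  constructor
  · intro h
    refine ⟨φ.symm w, ?_, φ.apply_symm_apply w⟩
    have h2 : H.Adj (φ u) (φ (φ.symm w)) := by rwa [φ.apply_symm_apply]
    exact φ.map_adj_iff.mp h2
  · rintro ⟨x, hx, rfl⟩
    exact φ.map_adj_iff.mpr hx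

lemma aux_locating_image (φ : H ≃g H) (u v : V) :
    locatingFinset H (φ u) (φ v) = (locatingFinset H u v).image φ := by
  unfold locatingFinset
  rw [Finset.image_union, Finset.image_symmDiff _ _ φ.injective,
    Finset.image_insert, Finset.image_singleton, aux_nf_image, aux_nf_image]

lemma aux_card_adj {k : ℕ} (hreg : H.IsRegularOfDegree k) {u v : V} (huv : H.Adj u v) :
    (locatingFinset H u v).card
      + ((H.neighborFinset u ∩ H.neighborFinset v).card
        + (H.neighborFinset u ∩ H.neighborFinset v).card) = k + k := by
  have h1 : locatingFinset H u v
      = symmDiff (H.neighborFinset u) (H.neighborFinset v) := by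
    unfold locatingFinset
    rw [Finset.union_eq_right]
    intro x hx
    rcases Finset.mem_insert.mp hx with rfl | hx
    · simp only [Finset.mem_symmDiff, SimpleGraph.mem_neighborFinset]
      exact Or.inr ⟨huv.symm, fun h => H.irrefl h⟩
    · rcases Finset.mem_singleton.mp hx with rfl
      simp only [Finset.mem_symmDiff, SimpleGraph.mem_neighborFinset]
      exact Or.inl ⟨huv, fun h => H.irrefl h⟩
  rw [h1, aux_symmDiff_card]
  rw [show (H.neighborFinset u).card = H.degree u from rfl,
    show (H.neighborFinset v).card = H.degree v from rfl, hreg u, hreg v]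

lemma aux_card_nonadj {k : ℕ} (hreg : H.IsRegularOfDegree k) {u v : V}
    (hne : u ≠ v) (huv : ¬H.Adj u v) :
    (locatingFinset H u v).card
      + ((H.neighborFinset u ∩ H.neighborFinset v).card
        + (H.neighborFinset u ∩ H.neighborFinset v).card) = k + k + 2 := by
  have hdis : Disjoint ({u, v} : Finset V)
      (symmDiff (H.neighborFinset u) (H.neighborFinset v)) := by
    rw [Finset.disjoint_left]
    intro x hx hx2
    simp only [Finset.mem_symmDiff, SimpleGraph.mem_neighborFinset] at hx2
    rcases Finset.mem_insert.mp hx with rfl | hx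
    · rcases hx2 with ⟨h, _⟩ | ⟨h, _⟩
      · exact H.irrefl h
      · exact huv (h.symm)
    · rcases Finset.mem_singleton.mp hx with rfl
      rcases hx2 with ⟨h, _⟩ | ⟨h, _⟩
      · exact huv h
      · exact H.irrefl h
  have hcu : ({u, v} : Finset V).card = 2 := Finset.card_pair hne
  unfold locatingFinset
  rw [Finset.card_union_of_disjoint hdis, hcu]
  have := aux_symmDiff_card (H.neighborFinset u) (H.neighborFinset v)
  rw [show (H.neighborFinset u).card = H.degree u from rfl,
    show (H.neighborFinset v).card = H.degree v from rfl, hreg u, hreg v] at this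
  omega

lemma aux_lambda_bridge :
    lambdaMax H =
      if hne : (Finset.univ.filter fun p : V × V => H.Adj p.1 p.2).Nonempty then
        (Finset.univ.filter fun p : V × V => H.Adj p.1 p.2).sup' hne fun p =>
          ((H.neighborFinset p.1 ∩ H.neighborFinset p.2).card : ℤ)
      else -1 := by
  unfold lambdaMax
  split
  next h1 =>
    split
    next h2 =>
      refine Finset.sup'_congr h1 (Finset.filter_congr_decidable _ _ _) fun p hp => ?_
      exact congrArg _ (congrArg Finset.card (by ext w; simp [SimpleGraph.mem_neighborFinset]))
    next h2 =>
      obtain ⟨p, hp⟩ := h1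
      simp only [Finset.mem_filter] at hp
      exact absurd ⟨p, by simp only [Finset.mem_filter]; exact hp⟩ h2
  next h1 =>
    split
    next h2 =>
      obtain ⟨p, hp⟩ := h2
      simp only [Finset.mem_filter] at hp
      exact absurd ⟨p, by simp only [Finset.mem_filter]; exact hp⟩ h1
    next h2 => rfl

lemma aux_mu_bridge :
    muMax H =
      if hne : (Finset.univ.filter fun p : V × V => p.1 ≠ p.2 ∧ ¬H.Adj p.1 p.2).Nonempty then
        (Finset.univ.filter fun p : V × V => p.1 ≠ p.2 ∧ ¬H.Adj p.1 p.2).sup' hne fun p =>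
          ((H.neighborFinset p.1 ∩ H.neighborFinset p.2).card : ℤ)
      else 0 := by
  unfold muMax
  split
  next h1 =>
    split
    next h2 =>
      refine Finset.sup'_congr h1 (Finset.filter_congr_decidable _ _ _) fun p hp => ?_
      exact congrArg _ (congrArg Finset.card (by ext w; simp [SimpleGraph.mem_neighborFinset]))
    next h2 =>
      obtain ⟨p, hp⟩ := h1
      simp only [Finset.mem_filter] at hp
      exact absurd ⟨p, by simp only [Finset.mem_filter]; exact hp⟩ h2
  next h1 =>
    split
    next h2 =>
      obtain ⟨p, hp⟩ := h2
      simp only [Finset.mem_filter] at hp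
      exact absurd ⟨p, by simp only [Finset.mem_filter]; exact hp⟩ h1
    next h2 => rfl

lemma aux_lambda_le {u v : V} (huv : H.Adj u v) :
    ((H.neighborFinset u ∩ H.neighborFinset v).card : ℤ) ≤ lambdaMax H := by
  rw [aux_lambda_bridge]
  have hne : (Finset.univ.filter fun p : V × V => H.Adj p.1 p.2).Nonempty :=
    ⟨(u, v), by simp [huv]⟩
  rw [dif_pos hne]
  have hmem : ((u, v) : V × V) ∈ Finset.univ.filter (fun p : V × V => H.Adj p.1 p.2) := by
    simp [huv]
  exact Finset.le_sup'
    (fun p : V × V => ((H.neighborFinset p.1 ∩ H.neighborFinset p.2).card : ℤ)) hmem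

lemma aux_lambda_eq (h : ∃ a b : V, H.Adj a b) :
    ∃ a b : V, H.Adj a b ∧
      lambdaMax H = ((H.neighborFinset a ∩ H.neighborFinset b).card : ℤ) := by
  rw [aux_lambda_bridge]
  obtain ⟨a, b, hab⟩ := h
  have hne : (Finset.univ.filter fun p : V × V => H.Adj p.1 p.2).Nonempty :=
    ⟨(a, b), by simp [hab]⟩
  rw [dif_pos hne]
  obtain ⟨p, hp, hsup⟩ := Finset.exists_mem_eq_sup' hne fun p : V × V =>
    ((H.neighborFinset p.1 ∩ H.neighborFinset p.2).card : ℤ)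
  simp only [Finset.mem_filter] at hp
  exact ⟨p.1, p.2, hp.2, hsup⟩

lemma aux_lambda_empty (h : ¬∃ a b : V, H.Adj a b) : lambdaMax H = -1 := by
  rw [aux_lambda_bridge]
  rw [dif_neg]
  rintro ⟨p, hp⟩
  simp only [Finset.mem_filter] at hp
  exact h ⟨p.1, p.2, hp.2⟩

lemma aux_mu_le {u v : V} (hne : u ≠ v) (huv : ¬H.Adj u v) :
    ((H.neighborFinset u ∩ H.neighborFinset v).card : ℤ) ≤ muMax H := by
  rw [aux_mu_bridge]
  have hne2 : (Finset.univ.filter fun p : V × V => p.1 ≠ p.2 ∧ ¬H.Adj p.1 p.2).Nonempty :=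
    ⟨(u, v), by simp [hne, huv]⟩
  rw [dif_pos hne2]
  have hmem : ((u, v) : V × V) ∈ Finset.univ.filter
      (fun p : V × V => p.1 ≠ p.2 ∧ ¬H.Adj p.1 p.2) := by
    simp [hne, huv]
  exact Finset.le_sup'
    (fun p : V × V => ((H.neighborFinset p.1 ∩ H.neighborFinset p.2).card : ℤ)) hmem

lemma aux_mu_eq (h : ∃ a b : V, a ≠ b ∧ ¬H.Adj a b) :
    ∃ a b : V, a ≠ b ∧ ¬H.Adj a b ∧
      muMax H = ((H.neighborFinset a ∩ H.neighborFinset b).card : ℤ) := by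
  rw [aux_mu_bridge]
  obtain ⟨a, b, hab, hnadj⟩ := h
  have hne : (Finset.univ.filter fun p : V × V => p.1 ≠ p.2 ∧ ¬H.Adj p.1 p.2).Nonempty :=
    ⟨(a, b), by simp [hab, hnadj]⟩
  rw [dif_pos hne]
  obtain ⟨p, hp, hsup⟩ := Finset.exists_mem_eq_sup' hne fun p : V × V =>
    ((H.neighborFinset p.1 ∩ H.neighborFinset p.2).card : ℤ)
  simp only [Finset.mem_filter] at hp
  exact ⟨p.1, p.2, hp.2.1, hp.2.2, hsup⟩

lemma aux_mu_empty (h : ¬∃ a b : V, a ≠ b ∧ ¬H.Adj a b) : muMax H = 0 := by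
  rw [aux_mu_bridge]
  rw [dif_neg]
  rintro ⟨p, hp⟩
  simp only [Finset.mem_filter] at hp
  exact h ⟨p.1, p.2, hp.2.1, hp.2.2⟩

end AuxLemmas

/-- For a vertex-transitive graph `H` (of degree `k`),
`l_f(H) = |V(H)| / (2k(H) - max{2λ(H), 2μ(H) - 2})`. -/
theorem stmt_1 {V : Type*} [Fintype V] [DecidableEq V] (H : SimpleGraph V)
    [DecidableRel H.Adj] (hcard : 2 ≤ Fintype.card V)
    (hvt : IsVertexTransitive H) (k : ℕ) (hreg : H.IsRegularOfDegree k) :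
    fracLoc H =
      (Fintype.card V : ℝ) /
        ((2 * (k : ℤ) - max (2 * lambdaMax H) (2 * muMax H - 2) : ℤ) : ℝ) := by
  classical
  set M : ℤ := max (2 * lambdaMax H) (2 * muMax H - 2) with hM
  -- Lower bound on the cardinality of every locating set
  have hB : ∀ u v : V, u ≠ v → 2 * (k : ℤ) - M ≤ ((locatingFinset H u v).card : ℤ) := by
    intro u v huv
    by_cases h : H.Adj u v
    · have h1 := aux_card_adj H hreg h
      have h1' : ((locatingFinset H u v).card : ℤ)
          + (((H.neighborFinset u ∩ H.neighborFinset v).card : ℤ)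
            + ((H.neighborFinset u ∩ H.neighborFinset v).card : ℤ)) = (k : ℤ) + k := by
        exact_mod_cast h1
      have h2 := aux_lambda_le H h
      have h3 : 2 * lambdaMax H ≤ M := le_max_left _ _
      linarith
    · have h1 := aux_card_nonadj H hreg huv h
      have h1' : ((locatingFinset H u v).card : ℤ)
          + (((H.neighborFinset u ∩ H.neighborFinset v).card : ℤ)
            + ((H.neighborFinset u ∩ H.neighborFinset v).card : ℤ)) = (k : ℤ) + k + 2 := by
        exact_mod_cast h1
      have h2 := aux_mu_le H huv h
      have h3 : 2 * muMax H - 2 ≤ M := le_max_right _ _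
      linarith
  -- Existence of a locating set achieving the bound
  have hA : ∃ u v : V, u ≠ v ∧ ((locatingFinset H u v).card : ℤ) = 2 * (k : ℤ) - M := by
    by_cases hE : ∃ a b : V, H.Adj a b
    · obtain ⟨a, b, hab, hl⟩ := aux_lambda_eq H hE
      have hl0 : 0 ≤ lambdaMax H := hl ▸ Int.natCast_nonneg _
      have hcarda : ((locatingFinset H a b).card : ℤ) = 2 * (k : ℤ) - 2 * lambdaMax H := by
        have h1 := aux_card_adj H hreg hab
        have h1' : ((locatingFinset H a b).card : ℤ)
            + (((H.neighborFinset a ∩ H.neighborFinset b).card : ℤ)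
              + ((H.neighborFinset a ∩ H.neighborFinset b).card : ℤ)) = (k : ℤ) + k := by
          exact_mod_cast h1
        rw [hl]
        linarith
      rcases le_or_gt (2 * muMax H - 2) (2 * lambdaMax H) with hmle | hlt
      · exact ⟨a, b, H.ne_of_adj hab, by rw [hcarda, hM, max_eq_left hmle]⟩
      · have hN : ∃ a b : V, a ≠ b ∧ ¬H.Adj a b := by
          by_contra hc
          rw [aux_mu_empty H hc] at hlt
          omega
        obtain ⟨c, d, hcd, hcd2, hmu⟩ := aux_mu_eq H hN
        have hcardc : ((locatingFinset H c d).card : ℤ)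
            = 2 * (k : ℤ) - (2 * muMax H - 2) := by
          have h1 := aux_card_nonadj H hreg hcd hcd2
          have h1' : ((locatingFinset H c d).card : ℤ)
              + (((H.neighborFinset c ∩ H.neighborFinset d).card : ℤ)
                + ((H.neighborFinset c ∩ H.neighborFinset d).card : ℤ)) = (k : ℤ) + k + 2 := by
            exact_mod_cast h1
          rw [hmu]
          linarith
        exact ⟨c, d, hcd, by rw [hcardc, hM, max_eq_right (le_of_lt hlt)]⟩
    · have hlm : lambdaMax H = -1 := aux_lambda_empty H hE
      have hN : ∃ a b : V, a ≠ b ∧ ¬H.Adj a b := by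
        obtain ⟨a, b, hab⟩ := Fintype.exists_pair_of_one_lt_card (show 1 < Fintype.card V by omega)
        exact ⟨a, b, hab, fun h => hE ⟨a, b, h⟩⟩
      obtain ⟨c, d, hcd, hcd2, hmu⟩ := aux_mu_eq H hN
      have hmu0 : 0 ≤ muMax H := hmu ▸ Int.natCast_nonneg _
      have hmax : M = 2 * muMax H - 2 := by rw [hM, hlm]; omega
      have hcardc : ((locatingFinset H c d).card : ℤ)
          = 2 * (k : ℤ) - (2 * muMax H - 2) := by
        have h1 := aux_card_nonadj H hreg hcd hcd2
        have h1' : ((locatingFinset H c d).card : ℤ)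
            + (((H.neighborFinset c ∩ H.neighborFinset d).card : ℤ)
              + ((H.neighborFinset c ∩ H.neighborFinset d).card : ℤ)) = (k : ℤ) + k + 2 := by
          exact_mod_cast h1
        rw [hmu]
        linarith
      exact ⟨c, d, hcd, by rw [hcardc, hmax]⟩
  obtain ⟨u0, v0, hu0v0, hcard0⟩ := hA
  have hs2 : (2 : ℤ) ≤ 2 * (k : ℤ) - M := by
    rw [← hcard0]
    have hsub : ({u0, v0} : Finset V) ⊆ locatingFinset H u0 v0 :=
      Finset.subset_union_left
    have h2 := Finset.card_le_card hsub
    rw [Finset.card_pair hu0v0] at h2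
    exact_mod_cast h2
  set sZ : ℤ := 2 * (k : ℤ) - M with hsZ
  set s : ℝ := (sZ : ℝ) with hs
  have hs2R : (2 : ℝ) ≤ s := by rw [hs]; exact_mod_cast hs2
  have hspos : 0 < s := by linarith
  have hn0 : 0 < (Fintype.card V : ℝ) := by
    have : 0 < Fintype.card V := by omega
    exact_mod_cast this
  -- the constant function is a locating function
  have hloc0 : IsLocatingFn H (fun _ => s⁻¹) := by
    constructor
    · intro v
      refine Set.mem_Icc.mpr ⟨by positivity, inv_le_one_of_one_le₀ (by linarith)⟩
    · intro v1 v2 hne12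
      rw [Finset.sum_const, nsmul_eq_mul]
      have hcardge : s ≤ ((locatingFinset H v1 v2).card : ℝ) := by
        have := hB v1 v2 hne12
        rw [hs, hsZ]
        exact_mod_cast this
      calc (1 : ℝ) = s * s⁻¹ := (mul_inv_cancel₀ (ne_of_gt hspos)).symm
        _ ≤ ((locatingFinset H v1 v2).card : ℝ) * s⁻¹ :=
            mul_le_mul_of_nonneg_right hcardge (inv_nonneg.2 hspos.le)
  have hmemA : (Fintype.card V : ℝ) / s
      ∈ {w : ℝ | ∃ g, IsLocatingFn H g ∧ w = ∑ v, g v} := by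
    refine ⟨fun _ => s⁻¹, hloc0, ?_⟩
    rw [Finset.sum_const, nsmul_eq_mul, Finset.card_univ, div_eq_mul_inv]
  -- lower bound for every locating function
  have hlb : ∀ w ∈ {w : ℝ | ∃ g, IsLocatingFn H g ∧ w = ∑ v, g v},
      (Fintype.card V : ℝ) / s ≤ w := by
    rintro w ⟨g, hg, rfl⟩
    haveI : Finite (H ≃g H) := Finite.of_injective _ RelIso.toEquiv_injective
    haveI : Fintype (H ≃g H) := Fintype.ofFinite _
    haveI : Nonempty (H ≃g H) := ⟨RelIso.refl _⟩
    set W : ℝ := ∑ v, g v with hW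
    have hconst : ∀ v v' : V, ∑ φ : H ≃g H, g (φ v) = ∑ φ : H ≃g H, g (φ v') := by
      intro v v'
      obtain ⟨ψ, hψ⟩ := hvt v' v
      refine Fintype.sum_equiv
        ⟨fun φ => ψ.trans φ, fun φ => ψ.symm.trans φ, ?_, ?_⟩ _ _ ?_
      · intro φ; ext x; simp
      · intro φ; ext x; simp
      · intro φ
        show g (φ v) = g ((ψ.trans φ) v')
        rw [RelIso.trans_apply, hψ]
    set c : ℝ := ∑ φ : H ≃g H, g (φ u0) with hc
    set A : ℝ := (Fintype.card (H ≃g H) : ℝ) with hAdef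
    have hApos : 0 < A := by
      have : 0 < Fintype.card (H ≃g H) := Fintype.card_pos
      rw [hAdef]
      exact_mod_cast this
    have hsum : (Fintype.card V : ℝ) * c = A * W := by
      calc (Fintype.card V : ℝ) * c = ∑ _v : V, c := by
            rw [Finset.sum_const, nsmul_eq_mul, Finset.card_univ]
        _ = ∑ v : V, ∑ φ : H ≃g H, g (φ v) :=
            Finset.sum_congr rfl fun v _ => hconst u0 v
        _ = ∑ φ : H ≃g H, ∑ v : V, g (φ v) := Finset.sum_comm
        _ = ∑ _φ : H ≃g H, W :=
            Finset.sum_congr rfl fun φ _ => φ.toEquiv.sum_comp g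
        _ = A * W := by rw [Finset.sum_const, nsmul_eq_mul, Finset.card_univ]
    have h1 : ∀ φ : H ≃g H, (1 : ℝ) ≤ ∑ v ∈ locatingFinset H u0 v0, g (φ v) := by
      intro φ
      have hne' : φ u0 ≠ φ v0 := fun h => hu0v0 (φ.injective h)
      have := hg.2 (φ u0) (φ v0) hne'
      rw [aux_locating_image] at this
      rwa [Finset.sum_image (fun x _ y _ h => φ.injective h)] at this
    have h2 : ∑ φ : H ≃g H, ∑ v ∈ locatingFinset H u0 v0, g (φ v)
        = ((locatingFinset H u0 v0).card : ℝ) * c := by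
      rw [Finset.sum_comm]
      rw [Finset.sum_congr rfl (fun v _ => hconst v u0)]
      rw [Finset.sum_const, nsmul_eq_mul]
    have h3 : A ≤ ∑ φ : H ≃g H, ∑ v ∈ locatingFinset H u0 v0, g (φ v) := by
      calc A = ∑ _φ : H ≃g H, (1 : ℝ) := by
            rw [Finset.sum_const, nsmul_eq_mul, Finset.card_univ, mul_one]
        _ ≤ _ := Finset.sum_le_sum fun φ _ => h1 φ
    have hscard : s = ((locatingFinset H u0 v0).card : ℝ) := by
      rw [hs, hsZ]
      exact_mod_cast hcard0.symm
    have hkey : A ≤ s * c := by rw [hscard]; linarith [h2 ▸ h3]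
    rw [div_le_iff₀ hspos]
    have h4 : (Fintype.card V : ℝ) * A ≤ (W * s) * A := by
      nlinarith [mul_le_mul_of_nonneg_left hkey hn0.le, hsum, hspos.le]
    exact le_of_mul_le_mul_right h4 hApos
  unfold fracLoc
  exact le_antisymm (csInf_le ⟨_, hlb⟩ hmemA) (le_csInf ⟨_, hmemA⟩ hlb)
end

section
/- Let G be a connected graph and H a graph. If x and y are two distinct vertices of the corona product G⊙H such that {x,y} is not contained in ^uH for any vertex u of G, then there exists a vertex u0 of G such that ^{u0}H ⊆ R_{G⊙H}{x,y}. -/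
open Finset

variable {α β V : Type*}

section Aux

open SimpleGraph

lemma aux_edist_le_one_cases {F : SimpleGraph V} {u v : V} (h : F.edist u v ≤ 1) :
    u = v ∨ F.Adj u v := by
  have hne : F.edist u v ≠ ⊤ := by intro ht; rw [ht] at h; simp at h
  obtain ⟨p, hp⟩ := SimpleGraph.exists_walk_of_edist_ne_top hne
  have hl : p.length ≤ 1 := by
    have := hp ▸ h; exact_mod_cast this
  cases p with
  | nil => exact Or.inl rfl
  | cons h1 q =>
    cases q with
    | nil => exact Or.inr h1
    | cons h2 r => simp [SimpleGraph.Walk.length_cons] at hl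

lemma aux_edist_le_two_cases {F : SimpleGraph V} {u v : V} (h : F.edist u v ≤ 2) :
    u = v ∨ F.Adj u v ∨ ∃ m, F.Adj u m ∧ F.Adj m v := by
  have hne : F.edist u v ≠ ⊤ := by intro ht; rw [ht] at h; simp at h
  obtain ⟨p, hp⟩ := SimpleGraph.exists_walk_of_edist_ne_top hne
  have hl : p.length ≤ 2 := by
    have := hp ▸ h; exact_mod_cast this
  cases p with
  | nil => exact Or.inl rfl
  | cons h1 q =>
    cases q with
    | nil => exact Or.inr (Or.inl h1)
    | cons h2 r =>
      have hr : r.length = 0 := by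
        simp only [SimpleGraph.Walk.length_cons] at hl; omega
      have := SimpleGraph.Walk.eq_of_length_eq_zero hr
      subst this
      exact Or.inr (Or.inr ⟨_, h1, h2⟩)

lemma aux_edist_le_one_of_adj {F : SimpleGraph V} {u v : V} (h : F.Adj u v) :
    F.edist u v ≤ 1 := by
  have := SimpleGraph.edist_le h.toWalk
  simpa using this

lemma aux_edist_le_two_of_adj_adj {F : SimpleGraph V} {u m v : V} (h1 : F.Adj u m)
    (h2 : F.Adj m v) : F.edist u v ≤ 2 := by
  have := SimpleGraph.edist_le (SimpleGraph.Walk.cons h1 h2.toWalk)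
  simpa using this

lemma corona_adj_inl_inr {G : SimpleGraph α} {H : SimpleGraph β} {u : α} {p : α × β} :
    (G.corona H).Adj (Sum.inl u) (Sum.inr p) ↔ u = p.1 := Iff.rfl

lemma corona_adj_inr_inl {G : SimpleGraph α} {H : SimpleGraph β} {u : α} {p : α × β} :
    (G.corona H).Adj (Sum.inr p) (Sum.inl u) ↔ p.1 = u := Iff.rfl

lemma corona_adj_inr_inr {G : SimpleGraph α} {H : SimpleGraph β} {p q : α × β} :
    (G.corona H).Adj (Sum.inr p) (Sum.inr q) ↔ p.1 = q.1 ∧ H.Adj p.2 q.2 := Iff.rfl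

lemma corona_adj_inl_inl {G : SimpleGraph α} {H : SimpleGraph β} {u w : α} :
    (G.corona H).Adj (Sum.inl u) (Sum.inl w) ↔ G.Adj u w := Iff.rfl

/-- vertices in different copies of H are at distance > 2 -/
lemma corona_two_lt {G : SimpleGraph α} {H : SimpleGraph β} {p q : α × β}
    (hpq : p.1 ≠ q.1) : ¬ (G.corona H).edist (Sum.inr p) (Sum.inr q) ≤ 2 := by
  intro hle
  rcases aux_edist_le_two_cases hle with heq | hadj | ⟨m, h1, h2⟩
  · exact hpq (congrArg (fun z => Sum.elim id Prod.fst z) heq)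
  · exact hpq (corona_adj_inr_inr.mp hadj).1
  · cases m with
    | inl c =>
      exact hpq ((corona_adj_inr_inl.mp h1).trans (corona_adj_inl_inr.mp h2))
    | inr r =>
      exact hpq ((corona_adj_inr_inr.mp h1).1.trans (corona_adj_inr_inr.mp h2).1)

end Aux

lemma exists_adj_of_connected {G : SimpleGraph α} [Fintype α] (hG : G.Connected)
    (hca : 2 ≤ Fintype.card α) (u : α) : ∃ u0, G.Adj u u0 := by
  obtain ⟨u', hne⟩ := Fintype.exists_ne_of_one_lt_card (by omega) u
  obtain ⟨p⟩ := hG.preconnected u u'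
  cases p with
  | nil => exact absurd rfl hne
  | cons ha q => exact ⟨_, ha⟩

theorem stmt_5' {α β : Type*} [Fintype α] [Fintype β]
    (G : SimpleGraph α) (H : SimpleGraph β)
    (hG : G.Connected) (hca : 2 ≤ Fintype.card α) (hcb : 2 ≤ Fintype.card β)
    (x y : α ⊕ α × β) (hxy : x ≠ y)
    (h : ∀ u : α, ¬∃ w1 w2 : β, x = Sum.inr (u, w1) ∧ y = Sum.inr (u, w2)) :
    ∃ u0 : α, ∀ v : β, Sum.inr (u0, v) ∈ resolvingFinset (G.corona H) x y := by
  have key : ∀ (u0 : α) (k : ℕ∞),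
      (∀ v : β, (G.corona H).edist x (Sum.inr (u0, v)) ≤ k) →
      (∀ v : β, ¬ (G.corona H).edist y (Sum.inr (u0, v)) ≤ k) →
      ∀ v : β, Sum.inr (u0, v) ∈ resolvingFinset (G.corona H) x y := by
    intro u0 k hx hy v
    simp only [resolvingFinset, Finset.mem_filter, Finset.mem_univ, true_and]
    exact fun heq => hy v (heq ▸ hx v)
  have key' : ∀ (u0 : α) (k : ℕ∞),
      (∀ v : β, (G.corona H).edist y (Sum.inr (u0, v)) ≤ k) →
      (∀ v : β, ¬ (G.corona H).edist x (Sum.inr (u0, v)) ≤ k) →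
      ∀ v : β, Sum.inr (u0, v) ∈ resolvingFinset (G.corona H) x y := by
    intro u0 k hy hx v
    simp only [resolvingFinset, Finset.mem_filter, Finset.mem_univ, true_and]
    exact fun heq => hx v (heq.symm ▸ hy v)
  obtain (u1 | ⟨u1, w1⟩) := x <;> obtain (u2 | ⟨u2, w2⟩) := y
  · -- x = inl u1, y = inl u2
    have hne : u1 ≠ u2 := fun he => hxy (by rw [he])
    refine ⟨u1, key u1 1 (fun v => aux_edist_le_one_of_adj (corona_adj_inl_inr.mpr rfl))
      (fun v hle => ?_)⟩
    rcases aux_edist_le_one_cases hle with heq | hadj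
    · exact absurd heq (by simp)
    · exact hne (corona_adj_inl_inr.mp hadj).symm
  · -- x = inl u1, y = inr (u2, w2)
    by_cases hu : u1 = u2
    · subst hu
      obtain ⟨u0, ha⟩ := exists_adj_of_connected hG hca u1
      refine ⟨u0, key u0 2 (fun v => aux_edist_le_two_of_adj_adj
        (corona_adj_inl_inl.mpr ha) (corona_adj_inl_inr.mpr rfl))
        (fun v => corona_two_lt (fun he => ha.ne he))⟩
    · refine ⟨u1, key u1 1 (fun v => aux_edist_le_one_of_adj (corona_adj_inl_inr.mpr rfl))
        (fun v hle => ?_)⟩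
      rcases aux_edist_le_one_cases hle with heq | hadj
      · exact hu (by injection heq with h'; exact (congrArg Prod.fst h').symm)
      · exact hu (corona_adj_inr_inr.mp hadj).1.symm
  · -- x = inr (u1, w1), y = inl u2
    by_cases hu : u2 = u1
    · subst hu
      obtain ⟨u0, ha⟩ := exists_adj_of_connected hG hca u2
      refine ⟨u0, key' u0 2 (fun v => aux_edist_le_two_of_adj_adj
        (corona_adj_inl_inl.mpr ha) (corona_adj_inl_inr.mpr rfl))
        (fun v => corona_two_lt (fun he => ha.ne he))⟩
    · refine ⟨u2, key' u2 1 (fun v => aux_edist_le_one_of_adj (corona_adj_inl_inr.mpr rfl))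
        (fun v hle => ?_)⟩
      rcases aux_edist_le_one_cases hle with heq | hadj
      · exact hu (by injection heq with h'; exact (congrArg Prod.fst h').symm)
      · exact hu (corona_adj_inr_inr.mp hadj).1.symm
  · -- both inr
    have hne : u1 ≠ u2 := by
      intro he
      exact h u1 ⟨w1, w2, rfl, by rw [he]⟩
    refine ⟨u1, key u1 2 (fun v => aux_edist_le_two_of_adj_adj
      (corona_adj_inr_inl.mpr rfl) (corona_adj_inl_inr.mpr rfl))
      (fun v => corona_two_lt (fun he => hne.symm he))⟩

/-- If `x ≠ y` are vertices of `G ⊙ H` not both lying in the same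
copy `ᵘH` of `H`, then some copy `ᵘ⁰H` is entirely contained in `R_{G⊙H}{x, y}`. -/
theorem stmt_5 {α β : Type*} [Fintype α] [Fintype β]
    (G : SimpleGraph α) (H : SimpleGraph β)
    (hG : G.Connected) (hca : 2 ≤ Fintype.card α) (hcb : 2 ≤ Fintype.card β)
    (x y : α ⊕ α × β) (hxy : x ≠ y)
    (h : ∀ u : α, ¬∃ w1 w2 : β, x = Sum.inr (u, w1) ∧ y = Sum.inr (u, w2)) :
    ∃ u0 : α, ∀ v : β, Sum.inr (u0, v) ∈ resolvingFinset (G.corona H) x y :=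
  stmt_5' G H hG hca hcb x y hxy h
end
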